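/- There is no irreducible complex character χ of a finite group G such that χχ̄ = a·1_G + b·χ + c·χ̄ with a, b, c strictly positive integers. (Indeed such an equation would force χ(1) = 1 and χ(1) = 2b + 1 simultaneously.) -/

import Mathlib

open CategoryTheory

open Module Polynomial in
lemma trace_inv_eq_conj_aux {W : Type*} [AddCommGroup W] [Module ℂ W] [FiniteDimensional ℂ W]
    (f f' : Module.End ℂ W) (hff' : f' * f = 1) (k : ℕ) (hk : 0 < k) (hfk : f ^ k = 1) :
    LinearMap.trace ℂ W f' = starRingEnd ℂ (LinearMap.trace ℂ W f) := by
  classical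
  have hsq : Squarefree ((X : ℂ[X]) ^ k - 1) :=
    (Polynomial.X_pow_sub_one_separable_iff.mpr (by exact_mod_cast hk.ne')).squarefree
  have hss : f.IsSemisimple :=
    Module.End.isSemisimple_of_squarefree_aeval_eq_zero hsq
      (by simp [map_sub, map_pow, hfk])
  have hST : ⨆ μ : ℂ, f.eigenspace μ = ⊤ := by
    have h1 := Module.End.iSup_maxGenEigenspace_eq_top f
    simp_rw [hss.isFinitelySemisimple.maxGenEigenspace_eq_eigenspace] at h1
    exact h1
  have hInd := Module.End.eigenspaces_iSupIndep f
  have hIn : DirectSum.IsInternal (fun μ : ℂ ↦ f.eigenspace μ) :=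
    DirectSum.isInternal_submodule_of_iSupIndep_of_iSup_eq_top hInd hST
  set v : ∀ μ : ℂ, Basis (Fin (finrank ℂ (f.eigenspace μ))) ℂ (f.eigenspace μ) :=
    fun μ ↦ Module.finBasis ℂ _ with hv
  set b := hIn.collectedBasis v with hb
  haveI : Fintype (Σ μ : ℂ, Fin (finrank ℂ (f.eigenspace μ))) :=
    FiniteDimensional.fintypeBasisIndex b
  have hmem : ∀ i, b i ∈ f.eigenspace i.1 := fun i ↦ hIn.collectedBasis_mem v i
  have heig : ∀ i, f (b i) = i.1 • b i := fun i ↦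
    Module.End.mem_eigenspace_iff.mp (hmem i)
  have hpow : ∀ i : (μ : ℂ) × Fin (finrank ℂ (f.eigenspace μ)), (i.1 : ℂ) ^ k = 1 := by
    intro i
    have hev : f.HasEigenvector i.1 (b i) := ⟨hmem i, b.ne_zero i⟩
    have h2 := hev.pow_apply k
    rw [hfk] at h2
    have h3 : ((i.1 : ℂ) ^ k - 1) • b i = 0 := by
      rw [sub_smul, one_smul, ← h2]; simp
    rcases smul_eq_zero.mp h3 with h4 | h4
    · exact sub_eq_zero.mp h4
    · exact absurd h4 (b.ne_zero i)
  have hne : ∀ i : (μ : ℂ) × Fin (finrank ℂ (f.eigenspace μ)), (i.1 : ℂ) ≠ 0 := by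
    intro i hi0
    have := hpow i
    rw [hi0, zero_pow hk.ne'] at this
    exact zero_ne_one this
  have hconj : ∀ i : Σ μ : ℂ, Fin (finrank ℂ (f.eigenspace μ)),
      starRingEnd ℂ i.1 = (i.1)⁻¹ := by
    intro i
    have habs : ‖i.1‖ = 1 := by
      have h1 : ‖i.1‖ ^ k = 1 := by
        rw [← norm_pow, hpow i, norm_one]
      rcases lt_trichotomy (‖i.1‖) 1 with hx | hx | hx
      · exact absurd h1 (by nlinarith [pow_lt_one₀ (norm_nonneg i.1) hx hk.ne'])
      · exact hx
      · exact absurd h1 (by nlinarith [one_lt_pow₀ hx hk.ne'])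
    refine eq_inv_of_mul_eq_one_right ?_
    rw [Complex.mul_conj, Complex.normSq_eq_norm_sq, habs]
    norm_num
  have heig' : ∀ i, f' (b i) = (i.1)⁻¹ • b i := by
    intro i
    have h1 : f' (f (b i)) = b i := by
      have := LinearMap.congr_fun hff' (b i)
      simpa using this
    rw [heig i, map_smul] at h1
    have h2 := congrArg (fun x ↦ (i.1)⁻¹ • x) h1
    simp only [smul_smul, inv_mul_cancel₀ (hne i), one_smul] at h2
    exact h2
  have htr : ∀ (g : Module.End ℂ W) (μs : _ → ℂ), (∀ i, g (b i) = μs i • b i) →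
      LinearMap.trace ℂ W g = ∑ i, μs i := by
    intro g μs hg
    rw [LinearMap.trace_eq_matrix_trace ℂ b g, Matrix.trace]
    congr 1
    ext i
    rw [Matrix.diag_apply, LinearMap.toMatrix_apply, hg i, map_smul]
    simp
  rw [htr f (fun i ↦ i.1) heig, htr f' (fun i ↦ (i.1)⁻¹) heig', map_sum]
  exact Finset.sum_congr rfl fun i _ ↦ (hconj i).symm

theorem no_irr_char_chi_mul_conj_eq
    {G : Type} [Group G] [Finite G] (V : FDRep ℂ G) (hV : Simple V)
    (a b c : ℕ) (ha : 0 < a) (hb : 0 < b) (hc : 0 < c)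
    (h : ∀ g : G, V.character g * starRingEnd ℂ (V.character g) =
      (a : ℂ) + (b : ℂ) * V.character g + (c : ℂ) * starRingEnd ℂ (V.character g)) :
    False := by
  classical
  letI : Fintype G := Fintype.ofFinite G
  haveI hinv : Invertible ((Fintype.card G : ℂ)) :=
    invertibleOfNonzero (by exact_mod_cast Fintype.card_pos.ne')
  haveI := hV
  have hcc : ∀ g : G, V.character g⁻¹ = starRingEnd ℂ (V.character g) := by
    intro g
    have hk : 0 < orderOf g := orderOf_pos g
    exact trace_inv_eq_conj_aux (V.ρ g) (V.ρ g⁻¹)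
      (by rw [← map_mul, inv_mul_cancel, map_one]) (orderOf g) hk
      (by rw [← map_pow, pow_orderOf_eq_one, map_one])
  letI : Fintype G := inferInstanceAs (Fintype G)
  have horth := FDRep.char_orthonormal (k := ℂ) (G := G) V V
  rw [if_pos ⟨Iso.refl V⟩] at horth
  have hS : ∑ g : G, V.character g * starRingEnd ℂ (V.character g) = (Fintype.card G : ℂ) := by
    have h1 : ∑ g : G, V.character g * V.character g⁻¹ = (Fintype.card G : ℂ) := by
      have h2 := congrArg (fun x : ℂ ↦ ((Fintype.card G : ℕ) : ℂ) * x) horth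
      simp only [smul_eq_mul, ← mul_assoc, Nat.card_eq_fintype_card, ← invOf_eq_inv, mul_invOf_self, one_mul, mul_one,
        Nat.cast_one, Nat.cast_zero] at h2
      exact h2
    rw [← h1]
    exact Finset.sum_congr rfl fun g _ ↦ by rw [hcc g]
  have havg : ∑ g : G, V.character g
      = (Fintype.card G : ℂ) * (Module.finrank ℂ (Representation.invariants V.ρ) : ℂ) := by
    have h1 := FDRep.average_char_eq_finrank_invariants V
    have h2 := congrArg (fun x : ℂ ↦ (Fintype.card G : ℂ) * x) h1
    simp only [smul_eq_mul, ← mul_assoc, Nat.card_eq_fintype_card, ← invOf_eq_inv, mul_invOf_self, one_mul] at h2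
    exact h2
  set m : ℕ := Module.finrank ℂ (Representation.invariants V.ρ) with hm
  have hsum : (Fintype.card G : ℂ) =
      (Fintype.card G : ℂ) * a + (b : ℂ) * ((Fintype.card G : ℂ) * m)
        + (c : ℂ) * ((Fintype.card G : ℂ) * m) := by
    calc (Fintype.card G : ℂ) = ∑ g : G, V.character g * starRingEnd ℂ (V.character g) := hS.symm
    _ = ∑ g : G, ((a : ℂ) + (b : ℂ) * V.character g + (c : ℂ) * starRingEnd ℂ (V.character g)) :=
        Finset.sum_congr rfl fun g _ ↦ h g
    _ = (Fintype.card G : ℂ) * a + (b : ℂ) * (∑ g : G, V.character g)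
        + (c : ℂ) * (∑ g : G, starRingEnd ℂ (V.character g)) := by
        rw [Finset.sum_add_distrib, Finset.sum_add_distrib, Finset.sum_const,
          ← Finset.mul_sum, ← Finset.mul_sum]
        simp [mul_comm]
    _ = _ := by
        rw [havg, ← map_sum, havg]
        simp [map_mul, map_natCast]
  have hkey : (1 : ℂ) = a + b * m + c * m := by
    have hcard : (Fintype.card G : ℂ) ≠ 0 := by exact_mod_cast Fintype.card_pos.ne'
    apply mul_left_cancel₀ hcard
    rw [mul_one]
    linear_combination hsum
  have hkeyN : 1 = a + b * m + c * m := by exact_mod_cast hkey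
  obtain ⟨n, hn⟩ : ∃ n : ℕ, V.character 1 = (n : ℂ) := ⟨_, FDRep.char_one V⟩
  have h1C := h 1
  rw [hn] at h1C
  have h1N : n * n = a + b * n + c * n := by
    have : (n : ℂ) * n = a + b * n + c * n := by simpa using h1C
    exact_mod_cast this
  have ha1 : a = 1 := by
    have hbm : b * m + c * m = 0 := by omega
    omega
  subst ha1
  have hn0 : n ≠ 0 := by rintro rfl; simp at h1N
  have hlt : b + c < n := by
    by_contra hle
    push_neg at hle
    have : n * n ≤ (b + c) * n := Nat.mul_le_mul_right n hle
    nlinarith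
  have : (b + c) * n + n ≤ n * n := by
    have : (b + c + 1) * n ≤ n * n := Nat.mul_le_mul_right n (by omega)
    nlinarith
  nlinarith
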